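/- For every n ≥ 1 and every k, |{σ ∈ SEP(n) : B_1^{+,n}(σ)=n and A_n^{+,−}(σ)=k}| = |{σ ∈ SEP(n) : B_1^{+,n}(σ)=n and A_n^{−,+}(σ)=k}|; that is, the distributions of A_n^{+,−} and of A_n^{−,+} coincide under the uniform measure on SEP(n) conditioned on {B_1^{+,n}=n}. -/

import Mathlib

open Finset Filter Real
open scoped Classical

/-- `σ` contains the pattern `τ` (a permutation of `Fin k` given as a function). -/
def ContainsPattern {n k : ℕ} (σ : Equiv.Perm (Fin n)) (τ : Fin k → Fin k) : Prop :=
  ∃ f : Fin k → Fin n, StrictMono f ∧ ∀ a b : Fin k, τ a < τ b ↔ σ (f a) < σ (f b)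

/-- A permutation is separable iff it avoids the patterns 2413 and 3142. -/
def Separable {n : ℕ} (σ : Equiv.Perm (Fin n)) : Prop :=
  ¬ ContainsPattern σ (![1, 3, 0, 2] : Fin 4 → Fin 4) ∧
  ¬ ContainsPattern σ (![2, 0, 3, 1] : Fin 4 → Fin 4)

/-- The set of separable permutations of `[n]`. -/
noncomputable def SEP (n : ℕ) : Finset (Equiv.Perm (Fin n)) :=
  Finset.univ.filter fun σ => Separable σ

/-- `IsAltSeq σ s l` : `l` is a strictly increasing list of indices along which the values of `σ`
alternate, starting with an ascent if `s = true` and starting with a descent if `s = false`. -/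
def IsAltSeq {n : ℕ} (σ : Equiv.Perm (Fin n)) (s : Bool) (l : List (Fin n)) : Prop :=
  l.Chain' (· < ·) ∧
  ∀ j : ℕ, ∀ hj : j + 1 < l.length,
    if decide (j % 2 = 0) = s then
      σ (l.get ⟨j, Nat.lt_of_succ_lt hj⟩) < σ (l.get ⟨j + 1, hj⟩)
    else
      σ (l.get ⟨j + 1, hj⟩) < σ (l.get ⟨j, Nat.lt_of_succ_lt hj⟩)

/-- The length of the longest alternating subsequence of `σ` of type `(s, e)`, where
`true` stands for ascent and `false` for descent.  An alternating subsequence starting with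
an ascent ends with a descent iff its length is odd (and similarly in the other cases), so the
type is encoded by the parity constraint; a singleton counts as a subsequence of types
`(+,-)` and `(-,+)` but not of types `(+,+)` and `(-,-)`. -/
noncomputable def altTypeLen {n : ℕ} (σ : Equiv.Perm (Fin n)) (s e : Bool) : ℕ :=
  sSup {k | ∃ l : List (Fin n), IsAltSeq σ s l ∧ l.length = k ∧
    k % 2 = (if s = e then 0 else 1)}

/-- The length `Aₙ(σ)` of the longest alternating subsequence of `σ`. -/
noncomputable def altLen {n : ℕ} (σ : Equiv.Perm (Fin n)) : ℕ :=
  sSup {k | ∃ l : List (Fin n), (IsAltSeq σ true l ∨ IsAltSeq σ false l) ∧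
    l.length = k ∧ 1 ≤ k}

/-- Expectation with respect to the uniform probability measure on `SEP n`. -/
noncomputable def sepExp (n : ℕ) (f : Equiv.Perm (Fin n) → ℝ) : ℝ :=
  (∑ σ ∈ SEP n, f σ) / (SEP n).card

/-- Variance with respect to the uniform probability measure on `SEP n`. -/
noncomputable def sepVar (n : ℕ) (f : Equiv.Perm (Fin n) → ℝ) : ℝ :=
  sepExp n (fun σ => (f σ - sepExp n f) ^ 2)

/-- `B₁^{+,n}(σ)`: the length of the first indecomposable block (0-indexed positions). -/
noncomputable def Bplus {n : ℕ} (σ : Equiv.Perm (Fin n)) : ℕ :=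
  sInf {j | 1 ≤ j ∧ ∀ i : Fin n, (i : ℕ) < j → (σ i : ℕ) < j}

/-- `B₁^{-,n}(σ)`: the length of the first skew indecomposable block (0-indexed positions). -/
noncomputable def Bminus {n : ℕ} (σ : Equiv.Perm (Fin n)) : ℕ :=
  sInf {j | 1 ≤ j ∧ ∀ i : Fin n, (i : ℕ) < j → n - j ≤ (σ i : ℕ)}

/-- Expectation over indecomposable separable permutations of `[n]`, i.e. the conditional
expectation under the uniform measure on `SEP n` given `{B₁^{+,n} = n}`. -/
noncomputable def indecExp (n : ℕ) (f : Equiv.Perm (Fin n) → ℝ) : ℝ :=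
  (∑ σ ∈ (SEP n).filter (fun σ => Bplus σ = n), f σ) /
    ((SEP n).filter (fun σ => Bplus σ = n)).card

/-! ### Auxiliary material: the reverse-complement involution -/

/-- Reverse-complement of a permutation. -/
noncomputable def rcPerm {n : ℕ} (σ : Equiv.Perm (Fin n)) : Equiv.Perm (Fin n) :=
  (Fin.revPerm.trans σ).trans Fin.revPerm

lemma rcPerm_apply {n : ℕ} (σ : Equiv.Perm (Fin n)) (x : Fin n) :
    rcPerm σ x = (σ x.rev).rev := rfl

lemma rcPerm_rcPerm {n : ℕ} (σ : Equiv.Perm (Fin n)) : rcPerm (rcPerm σ) = σ := by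
  ext x
  simp [rcPerm_apply, Fin.rev_rev]

lemma containsPattern_of_rc {n k : ℕ} {σ : Equiv.Perm (Fin n)} {τ : Fin k → Fin k}
    (h : ContainsPattern (rcPerm σ) τ) :
    ContainsPattern σ (fun a => (τ a.rev).rev) := by
  obtain ⟨f, hf, hp⟩ := h
  refine ⟨fun a => (f a.rev).rev, ?_, ?_⟩
  · intro a b hab
    exact Fin.rev_lt_rev.mpr (hf (Fin.rev_lt_rev.mpr hab))
  · intro a b
    rw [Fin.rev_lt_rev, hp b.rev a.rev, rcPerm_apply, rcPerm_apply, Fin.rev_lt_rev]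

lemma separable_rc {n : ℕ} {σ : Equiv.Perm (Fin n)} (h : Separable σ) :
    Separable (rcPerm σ) := by
  have hτ1 : (fun a : Fin 4 => ((![1, 3, 0, 2] : Fin 4 → Fin 4) a.rev).rev)
      = (![1, 3, 0, 2] : Fin 4 → Fin 4) := by decide
  have hτ2 : (fun a : Fin 4 => ((![2, 0, 3, 1] : Fin 4 → Fin 4) a.rev).rev)
      = (![2, 0, 3, 1] : Fin 4 → Fin 4) := by decide
  constructor
  · intro hc
    exact h.1 (hτ1 ▸ containsPattern_of_rc hc)
  · intro hc
    exact h.2 (hτ2 ▸ containsPattern_of_rc hc)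

lemma bplus_rc {n : ℕ} (hn : 1 ≤ n) {σ : Equiv.Perm (Fin n)} (h : Bplus σ = n) :
    Bplus (rcPerm σ) = n := by
  have hset : ∀ (τ : Equiv.Perm (Fin n)),
      n ∈ {j | 1 ≤ j ∧ ∀ i : Fin n, (i : ℕ) < j → (τ i : ℕ) < j} :=
    fun τ => ⟨hn, fun i _ => (τ i).isLt⟩
  unfold Bplus at h ⊢
  refine le_antisymm (Nat.sInf_le (hset _)) ?_
  by_contra hlt
  push_neg at hlt
  have hmem := Nat.sInf_mem (⟨n, hset (rcPerm σ)⟩ :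
    Set.Nonempty {j | 1 ≤ j ∧ ∀ i : Fin n, (i : ℕ) < j → ((rcPerm σ) i : ℕ) < j})
  set j := sInf {j | 1 ≤ j ∧ ∀ i : Fin n, (i : ℕ) < j → ((rcPerm σ) i : ℕ) < j} with hjdef
  obtain ⟨hj1, hjall⟩ := hmem
  have H : ∀ x : Fin n, n - j ≤ (x : ℕ) → n - j ≤ (σ x : ℕ) := by
    intro x hx
    have hxval : (x : ℕ) < n := x.isLt
    have hxrev : ((x.rev : Fin n) : ℕ) < j := by
      rw [Fin.val_rev]; omega
    have h2 := hjall x.rev hxrev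
    rw [rcPerm_apply, Fin.rev_rev, Fin.val_rev] at h2
    have := (σ x).isLt
    omega
  set T : Finset (Fin n) := Finset.univ.filter (fun x => n - j ≤ (x : ℕ)) with hT
  have hmapsto : ∀ x ∈ T, σ x ∈ T := by
    intro x hx
    simp only [hT, Finset.mem_filter, Finset.mem_univ, true_and] at hx ⊢
    exact H x hx
  have himg : T.image σ = T :=
    Finset.eq_of_subset_of_card_le (Finset.image_subset_iff.mpr hmapsto)
      (le_of_eq (Finset.card_image_of_injective T σ.injective).symm)
  have Hlow : ∀ x : Fin n, (x : ℕ) < n - j → (σ x : ℕ) < n - j := by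
    intro x hx
    by_contra hge
    push_neg at hge
    have hσT : σ x ∈ T := by
      simp only [hT, Finset.mem_filter, Finset.mem_univ, true_and]
      exact hge
    rw [← himg] at hσT
    obtain ⟨y, hy, hxy⟩ := Finset.mem_image.mp hσT
    have hyx : y = x := σ.injective hxy
    subst hyx
    simp only [hT, Finset.mem_filter, Finset.mem_univ, true_and] at hy
    omega
  have hle : sInf {j' | 1 ≤ j' ∧ ∀ i : Fin n, (i : ℕ) < j' → (σ i : ℕ) < j'} ≤ n - j :=
    Nat.sInf_le ⟨by omega, Hlow⟩
  omega

lemma isAltSeq_rc {n : ℕ} (σ : Equiv.Perm (Fin n)) (s : Bool) {l : List (Fin n)}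
    (hl : IsAltSeq σ s l) (hodd : l.length % 2 = 1) :
    IsAltSeq (rcPerm σ) (!s) ((l.map Fin.rev).reverse) := by
  obtain ⟨hchain, halt⟩ := hl
  set m := l.length with hmdef
  have hlen : ((l.map Fin.rev).reverse).length = m := by simp [hmdef]
  have e1 : ∀ (i : ℕ) (hi : i < ((l.map Fin.rev).reverse).length),
      ((l.map Fin.rev).reverse)[i] = (l[m - 1 - i]'(by rw [hlen] at hi; omega)).rev := by
    intro i hi
    rw [List.getElem_reverse, List.getElem_map]
    simp only [List.length_map]
    rfl
  constructor
  · unfold List.Chain' at hchain ⊢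
    rw [List.isChain_reverse, List.isChain_map]
    exact hchain.imp (fun {a b} hab => Fin.rev_lt_rev.mpr hab)
  · intro j hj
    simp only [List.get_eq_getElem]
    rw [hlen] at hj
    have h1 : j < ((l.map Fin.rev).reverse).length := by rw [hlen]; omega
    have h2 : j + 1 < ((l.map Fin.rev).reverse).length := by rw [hlen]; omega
    rw [e1 j h1, e1 (j+1) h2, rcPerm_apply, rcPerm_apply, Fin.rev_rev, Fin.rev_rev]
    have hidx : m - 1 - (j + 1) = m - 2 - j := by omega
    have hidx2 : (m - 2 - j) + 1 = m - 1 - j := by omega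
    have hj' : (m - 2 - j) + 1 < m := by omega
    have key := halt (m - 2 - j) (by omega)
    simp only [List.get_eq_getElem] at key
    have hpar : (m - 2 - j) % 2 = 1 - j % 2 := by omega
    rcases Nat.mod_two_eq_zero_or_one j with hp | hp <;> cases s <;>
      simp only [hp, hpar, hidx, hidx2] at key ⊢ <;>
      simp only [decide_true, decide_false, Bool.not_true, Bool.not_false] at key ⊢ <;>
      simpa using key

lemma altTypeLen_rc {n : ℕ} (σ : Equiv.Perm (Fin n)) (s e : Bool) (hse : s ≠ e) :
    altTypeLen (rcPerm σ) (!s) (!e) = altTypeLen σ s e := by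
  unfold altTypeLen
  congr 1
  have hse' : (!s) ≠ (!e) := by cases s <;> cases e <;> simp_all
  ext k
  simp only [Set.mem_setOf_eq, if_neg hse, if_neg hse']
  constructor
  · rintro ⟨l, hl, rfl, hk⟩
    have h2 := isAltSeq_rc (rcPerm σ) (!s) hl hk
    rw [rcPerm_rcPerm, Bool.not_not] at h2
    exact ⟨(l.map Fin.rev).reverse, h2, by simp, by simpa using hk⟩
  · rintro ⟨l, hl, rfl, hk⟩
    exact ⟨(l.map Fin.rev).reverse, isAltSeq_rc σ s hl hk, by simp, by simpa using hk⟩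

/-- The distributions of `Aₙ^{+,-}` and `Aₙ^{-,+}` coincide on `SEP n` conditioned on
`{B₁^{+,n} = n}`. -/
theorem altTypeLen_pm_mp_same_cond (n : ℕ) (hn : 1 ≤ n) (k : ℕ) :
    ((SEP n).filter (fun σ => Bplus σ = n ∧ altTypeLen σ true false = k)).card =
      ((SEP n).filter (fun σ => Bplus σ = n ∧ altTypeLen σ false true = k)).card := by
  apply Finset.card_bij' (fun σ _ => rcPerm σ) (fun σ _ => rcPerm σ)
  · intro σ hσ
    simp only [SEP, Finset.mem_filter, Finset.mem_univ, true_and] at hσ ⊢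
    obtain ⟨hsep, hB, hA⟩ := hσ
    refine ⟨separable_rc hsep, bplus_rc hn hB, ?_⟩
    have h := altTypeLen_rc σ true false (by simp)
    simpa using h.trans hA
  · intro σ hσ
    simp only [SEP, Finset.mem_filter, Finset.mem_univ, true_and] at hσ ⊢
    obtain ⟨hsep, hB, hA⟩ := hσ
    refine ⟨separable_rc hsep, bplus_rc hn hB, ?_⟩
    have h := altTypeLen_rc σ false true (by simp)
    simpa using h.trans hA
  · intro σ _
    exact rcPerm_rcPerm σ
  · intro σ _
    exact rcPerm_rcPerm σ
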